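/- Let μ be a compact-finite deficient topological measure on a locally compact Hausdorff space X and g ∈ C₀⁺(X). Then there exists a compact-finite deficient topological measure μ_g on X such that μ_g(K) = ∫₀^∞ μ(K ∩ g⁻¹([t,∞))) dt for every compact set K, μ_g(V) = ∫₀^∞ μ(V ∩ g⁻¹((t,∞))) dt for every open set V with μ(V) < ∞, and μ_g(K) ≤ ‖g‖_∞ · μ(K) for every compact set K. -/

import Mathlib

open MeasureTheory Set Filter Topology ENNReal

/-- A deficient topological measure on a topological space `X`: a set function with values in
`[0,∞]` (recorded on all sets, but constrained only on open and closed sets) that is finitely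
additive on disjoint compact sets, inner regular on open sets with respect to compact sets,
and outer regular on closed sets with respect to open sets. -/
structure DeficientTopologicalMeasure (X : Type*) [TopologicalSpace X] where
  m : Set X → ℝ≥0∞
  additive : ∀ ⦃C K : Set X⦄, IsCompact C → IsCompact K → Disjoint C K →
    m (C ∪ K) = m C + m K
  innerRegular : ∀ ⦃U : Set X⦄, IsOpen U →
    m U = ⨆ (K : Set X) (_ : IsCompact K) (_ : K ⊆ U), m K
  outerRegular : ∀ ⦃F : Set X⦄, IsClosed F →
    m F = ⨅ (U : Set X) (_ : IsOpen U) (_ : F ⊆ U), m U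

section Helpers

theorem lint_translate (f : ℝ → ℝ≥0∞) (c : ℝ) (s : Set ℝ) :
    ∫⁻ t in (fun x => x + c) ⁻¹' s, f (t + c) = ∫⁻ t in s, f t :=
  (measurePreserving_add_right volume c).setLIntegral_comp_preimage_emb
    (measurableEmbedding_addRight c) f s

theorem lint_shift_Ioc (f : ℝ → ℝ≥0∞) (d a b : ℝ) :
    ∫⁻ t in Ioc a b, f (t - d) = ∫⁻ t in Ioc (a - d) (b - d), f t := by
  have h := lint_translate f (-d) (Ioc (a - d) (b - d))
  rw [preimage_add_const_Ioc] at h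
  simp only [sub_neg_eq_add, sub_add_cancel] at h
  simp only [← sub_eq_add_neg] at h
  exact h

theorem lint_shift_Ioi (f : ℝ → ℝ≥0∞) (d a : ℝ) :
    ∫⁻ t in Ioi a, f (t - d) = ∫⁻ t in Ioi (a - d), f t := by
  have h := lint_translate f (-d) (Ioi (a - d))
  rw [preimage_add_const_Ioi] at h
  simp only [sub_neg_eq_add, sub_add_cancel] at h
  simp only [← sub_eq_add_neg] at h
  exact h

theorem lint_Ioi_restrict (f : ℝ → ℝ≥0∞) {M : ℝ} (hM0 : 0 ≤ M)
    (h0 : ∀ t, M < t → f t = 0) :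
    ∫⁻ t in Ioi (0:ℝ), f t = ∫⁻ t in Ioc 0 M, f t := by
  have hd : Disjoint (Ioc (0:ℝ) M) (Ioi M) :=
    disjoint_left.mpr fun x hx1 hx2 => absurd hx1.2 (not_le.mpr hx2)
  rw [← Ioc_union_Ioi_eq_Ioi hM0, lintegral_union measurableSet_Ioi hd]
  have : ∫⁻ t in Ioi M, f t = 0 := by
    rw [setLIntegral_congr_fun measurableSet_Ioi (fun x hx => h0 x hx)]
    exact lintegral_zero
  rw [this, add_zero]

theorem lint_split_Ioc (f : ℝ → ℝ≥0∞) {a b c : ℝ} (hab : a ≤ b) (hbc : b ≤ c) :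
    ∫⁻ t in Ioc a c, f t = (∫⁻ t in Ioc a b, f t) + ∫⁻ t in Ioc b c, f t := by
  have hd : Disjoint (Ioc a b) (Ioc b c) :=
    disjoint_left.mpr fun x hx1 hx2 => absurd hx1.2 (not_le.mpr hx2.1)
  rw [← Ioc_union_Ioc_eq_Ioc hab hbc, lintegral_union measurableSet_Ioc hd]

theorem lint_le_const (f : ℝ → ℝ≥0∞) {a b : ℝ} (c : ℝ≥0∞)
    (h : ∀ t ∈ Ioc a b, f t ≤ c) :
    ∫⁻ t in Ioc a b, f t ≤ ENNReal.ofReal (b - a) * c := by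
  calc ∫⁻ t in Ioc a b, f t ≤ ∫⁻ _ in Ioc a b, c := setLIntegral_mono measurable_const h
    _ = c * volume (Ioc a b) := setLIntegral_const _ _
    _ = ENNReal.ofReal (b - a) * c := by rw [Real.volume_Ioc, mul_comm]

theorem ennreal_le_of_forall_ofReal {a b c : ℝ≥0∞} (hc : c ≠ ∞)
    (h : ∀ δ : ℝ, 0 < δ → a ≤ b + ENNReal.ofReal δ * c) : a ≤ b := by
  refine ENNReal.le_of_forall_pos_le_add fun η hη _ => ?_
  have hct : (0:ℝ) < c.toReal + 1 := by positivity
  have hδ : (0:ℝ) < (η : ℝ) / (c.toReal + 1) := div_pos (by exact_mod_cast hη) hct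
  refine (h _ hδ).trans (add_le_add_right ?_ b)
  have hc' : c ≤ ENNReal.ofReal (c.toReal + 1) := by
    conv_lhs => rw [← ENNReal.ofReal_toReal hc]
    exact ENNReal.ofReal_le_ofReal (by linarith)
  calc ENNReal.ofReal ((η:ℝ) / (c.toReal + 1)) * c
      ≤ ENNReal.ofReal ((η:ℝ) / (c.toReal + 1)) * ENNReal.ofReal (c.toReal + 1) :=
        mul_le_mul_right hc' _
    _ = ENNReal.ofReal ((η:ℝ) / (c.toReal + 1) * (c.toReal + 1)) :=
        (ENNReal.ofReal_mul hδ.le).symm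
    _ = ENNReal.ofReal (η:ℝ) := by rw [div_mul_cancel₀ _ hct.ne']
    _ = (η : ℝ≥0∞) := ENNReal.ofReal_coe_nnreal

end Helpers

namespace Stmt4Aux
set_option linter.unusedSectionVars false

variable {X : Type*} [TopologicalSpace X] [T2Space X]

theorem m_mono_co (μ : DeficientTopologicalMeasure X) {C U : Set X}
    (hC : IsCompact C) (hU : IsOpen U) (hCU : C ⊆ U) : μ.m C ≤ μ.m U := by
  rw [μ.innerRegular hU]
  exact le_iSup_of_le C (le_iSup_of_le hC (le_iSup_of_le hCU le_rfl))

theorem m_mono_cc (μ : DeficientTopologicalMeasure X) {C K : Set X}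
    (hC : IsCompact C) (hK : IsCompact K) (hCK : C ⊆ K) : μ.m C ≤ μ.m K := by
  rw [μ.outerRegular hK.isClosed]
  exact le_iInf fun U => le_iInf fun hU => le_iInf fun hKU =>
    m_mono_co μ hC hU (hCK.trans hKU)

theorem m_mono_oo (μ : DeficientTopologicalMeasure X) {U V : Set X}
    (hU : IsOpen U) (hV : IsOpen V) (hUV : U ⊆ V) : μ.m U ≤ μ.m V := by
  rw [μ.innerRegular hU]
  exact iSup_le fun K => iSup_le fun hK => iSup_le fun hKU =>
    m_mono_co μ hK hV (hKU.trans hUV)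

theorem m_empty (μ : DeficientTopologicalMeasure X)
    (hcf : ∀ K : Set X, IsCompact K → μ.m K < ∞) : μ.m ∅ = 0 := by
  have h := μ.additive isCompact_empty isCompact_empty disjoint_bot_left
  rw [union_self] at h
  have h2 : μ.m ∅ + 0 = μ.m ∅ + μ.m ∅ := by rw [add_zero]; exact h
  exact ((ENNReal.add_right_inj (hcf ∅ isCompact_empty).ne).mp h2).symm

variable (μ : DeficientTopologicalMeasure X) (g : X → ℝ)

noncomputable def nu1 (K : Set X) : ℝ≥0∞ := ∫⁻ t in Ioi (0:ℝ), μ.m (K ∩ g ⁻¹' Ici t)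

noncomputable def nu2 (U : Set X) : ℝ≥0∞ :=
  ⨆ (K : Set X) (_ : IsCompact K) (_ : K ⊆ U), nu1 μ g K

noncomputable def num (E : Set X) : ℝ≥0∞ :=
  ⨅ (U : Set X) (_ : IsOpen U) (_ : E ⊆ U), nu2 μ g U

theorem cptAt (hg : Continuous g) {K : Set X} (hK : IsCompact K) (t : ℝ) :
    IsCompact (K ∩ g ⁻¹' Ici t) :=
  hK.inter_right (isClosed_Ici.preimage hg)

theorem A_antitone (hg : Continuous g) {K : Set X} (hK : IsCompact K) :
    Antitone fun t : ℝ => μ.m (K ∩ g ⁻¹' Ici t) := fun s t hst =>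
  m_mono_cc μ (cptAt g hg hK t) (cptAt g hg hK s)
    (inter_subset_inter_right _ (preimage_mono (Ici_subset_Ici.mpr hst)))

theorem A_le (hg : Continuous g) {K : Set X} (hK : IsCompact K) (t : ℝ) :
    μ.m (K ∩ g ⁻¹' Ici t) ≤ μ.m K :=
  m_mono_cc μ (cptAt g hg hK t) hK inter_subset_left

theorem A_eq_zero (h0 : μ.m ∅ = 0) {M : ℝ} (hgM : ∀ x, g x ≤ M)
    (K : Set X) {t : ℝ} (ht : M < t) : μ.m (K ∩ g ⁻¹' Ici t) = 0 := by
  have : K ∩ g ⁻¹' Ici t = ∅ :=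
    eq_empty_of_forall_notMem fun x hx => absurd hx.2 (by simp; linarith [hgM x])
  rw [this, h0]

theorem D_antitone (hg : Continuous g) {V : Set X} (hV : IsOpen V) :
    Antitone fun t : ℝ => μ.m (V ∩ g ⁻¹' Ioi t) := fun s t hst =>
  m_mono_oo μ (hV.inter (isOpen_Ioi.preimage hg))
    (hV.inter (isOpen_Ioi.preimage hg))
    (inter_subset_inter_right _ (preimage_mono (Ioi_subset_Ioi hst)))

theorem D_le {V : Set X} (hV : IsOpen V) (hg : Continuous g) (t : ℝ) :
    μ.m (V ∩ g ⁻¹' Ioi t) ≤ μ.m V :=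
  m_mono_oo μ (hV.inter (isOpen_Ioi.preimage hg)) hV inter_subset_left

theorem D_eq_zero (h0 : μ.m ∅ = 0) {M : ℝ} (hgM : ∀ x, g x ≤ M)
    (V : Set X) {t : ℝ} (ht : M ≤ t) : μ.m (V ∩ g ⁻¹' Ioi t) = 0 := by
  have : V ∩ g ⁻¹' Ioi t = ∅ :=
    eq_empty_of_forall_notMem fun x hx => absurd hx.2 (by simp; linarith [hgM x])
  rw [this, h0]

theorem nu1_le_mul (hg : Continuous g) (h0 : μ.m ∅ = 0) {M : ℝ} (hM0 : 0 ≤ M)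
    (hgM : ∀ x, g x ≤ M) {K : Set X} (hK : IsCompact K) :
    nu1 μ g K ≤ ENNReal.ofReal M * μ.m K := by
  rw [nu1, lint_Ioi_restrict _ hM0 (fun t ht => A_eq_zero μ g h0 hgM K ht)]
  have := lint_le_const (fun t => μ.m (K ∩ g ⁻¹' Ici t)) (a := 0) (b := M) (μ.m K)
    (fun t _ => A_le μ g hg hK t)
  simpa using this

theorem nu1_mono {C K : Set X} (hg : Continuous g) (hC : IsCompact C)
    (hK : IsCompact K) (hCK : C ⊆ K) : nu1 μ g C ≤ nu1 μ g K :=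
  lintegral_mono fun t => m_mono_cc μ (cptAt g hg hC t) (cptAt g hg hK t)
    (inter_subset_inter_left _ hCK)

theorem nu2_mono {U V : Set X} (hUV : U ⊆ V) : nu2 μ g U ≤ nu2 μ g V :=
  iSup_le fun K => iSup_le fun hK => iSup_le fun hKU =>
    le_iSup_of_le K (le_iSup_of_le hK (le_iSup_of_le (hKU.trans hUV) le_rfl))

theorem nu1_le_nu2 {K U : Set X} (hK : IsCompact K) (hKU : K ⊆ U) :
    nu1 μ g K ≤ nu2 μ g U :=
  le_iSup_of_le K (le_iSup_of_le hK (le_iSup_of_le hKU le_rfl))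

theorem num_open {U : Set X} (hU : IsOpen U) : num μ g U = nu2 μ g U := by
  refine le_antisymm ?_ (le_iInf fun V => le_iInf fun hV => le_iInf fun hUV => nu2_mono μ g hUV)
  exact iInf_le_of_le U (iInf_le_of_le hU (iInf_le_of_le subset_rfl le_rfl))

theorem keyB (hcf : ∀ K : Set X, IsCompact K → μ.m K < ∞) (hg : Continuous g)
    {M : ℝ} (hM0 : 0 ≤ M) (hgM : ∀ x, g x ≤ M)
    {K : Set X} (hK : IsCompact K) {δ : ℝ} (hδ : 0 < δ) :
    ∃ U : Set X, IsOpen U ∧ K ⊆ U ∧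
      ∀ C : Set X, IsCompact C → C ⊆ U →
        nu1 μ g C ≤ nu1 μ g K + ENNReal.ofReal δ * (μ.m K + ENNReal.ofReal M) := by
  have h0 : μ.m ∅ = 0 := m_empty μ hcf
  rcases eq_or_lt_of_le hM0 with hM | hM
  · -- M = 0 : everything vanishes
    refine ⟨univ, isOpen_univ, subset_univ _, fun C hC _ => ?_⟩
    have hz : nu1 μ g C = 0 := by
      rw [nu1, setLIntegral_congr_fun measurableSet_Ioi
        (fun t (ht : t ∈ Ioi (0:ℝ)) =>
          A_eq_zero μ g h0 hgM C (lt_of_le_of_lt hM.ge ht)), lintegral_zero]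
    simp [hz]
  · -- M > 0
    set n : ℕ := ⌈M / δ⌉₊ with hn
    have hnpos : 0 < n := Nat.ceil_pos.mpr (div_pos hM hδ)
    set Δ : ℝ := M / n with hΔ
    have hΔ0 : 0 < Δ := div_pos hM (by exact_mod_cast hnpos)
    have hnΔ : M = (n : ℝ) * Δ := by
      rw [hΔ]; field_simp
    have hΔδ : Δ ≤ δ := by
      rw [hΔ, div_le_iff₀ (by exact_mod_cast hnpos)]
      calc M = δ * (M / δ) := by field_simp
        _ ≤ δ * n := by
            have := Nat.le_ceil (M / δ)
            nlinarith [this]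
    have hΔM : Δ ≤ M := by
      calc Δ = 1 * Δ := (one_mul Δ).symm
        _ ≤ (n:ℝ) * Δ := by
            have : (1:ℝ) ≤ (n:ℝ) := by exact_mod_cast hnpos
            nlinarith
        _ = M := hnΔ.symm
    -- choose open neighborhoods of the level compacta
    have hex : ∀ i : ℕ, ∃ W : Set X, IsOpen W ∧ (K ∩ g ⁻¹' Ici ((i:ℝ) * Δ)) ⊆ W ∧
        μ.m W ≤ μ.m (K ∩ g ⁻¹' Ici ((i:ℝ) * Δ)) + ENNReal.ofReal δ := by
      intro i
      have hKi : IsCompact (K ∩ g ⁻¹' Ici ((i:ℝ) * Δ)) := cptAt g hg hK _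
      have hlt : μ.m (K ∩ g ⁻¹' Ici ((i:ℝ) * Δ)) <
          μ.m (K ∩ g ⁻¹' Ici ((i:ℝ) * Δ)) + ENNReal.ofReal δ :=
        ENNReal.lt_add_right (hcf _ hKi).ne (ENNReal.ofReal_pos.mpr hδ).ne'
      conv_lhs at hlt => rw [μ.outerRegular hKi.isClosed]
      simp only [iInf_lt_iff] at hlt
      obtain ⟨W, hWo, hKW, hW⟩ := hlt
      exact ⟨W, hWo, hKW, hW.le⟩
    choose W hWo hKW hWle using hex
    refine ⟨⋂ i ∈ Finset.range n, (W i ∪ g ⁻¹' Iio ((i:ℝ) * Δ)),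
      isOpen_biInter_finset fun i _ => (hWo i).union (isOpen_Iio.preimage hg),
      fun x hx => mem_iInter₂.mpr fun i _ => ?_, fun C hC hCU => ?_⟩
    · by_cases hgi : (i:ℝ) * Δ ≤ g x
      · exact Or.inl (hKW i ⟨hx, hgi⟩)
      · exact Or.inr (by simpa using not_le.mp hgi)
    · -- the pointwise bound
      have hpt : ∀ t ∈ Ioc (0:ℝ) M,
          μ.m (C ∩ g ⁻¹' Ici t) ≤ μ.m (K ∩ g ⁻¹' Ici (t - Δ)) + ENNReal.ofReal δ := by
        intro t ht
        set i : ℕ := ⌈t / Δ⌉₊ - 1 with hi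
        have hcpos : 1 ≤ ⌈t / Δ⌉₊ := Nat.ceil_pos.mpr (div_pos ht.1 hΔ0)
        have hicast : ((⌈t / Δ⌉₊ : ℕ) : ℝ) = (i : ℝ) + 1 := by
          rw [hi, Nat.cast_sub hcpos]; simp
        have hi1 : (i:ℝ) * Δ < t := by
          have h1 : (i : ℕ) < ⌈t / Δ⌉₊ := by omega
          have h2 : (i:ℝ) < t / Δ := Nat.lt_ceil.mp h1
          calc (i:ℝ) * Δ < (t / Δ) * Δ := by nlinarith
            _ = t := by field_simp
        have hi2 : t - Δ ≤ (i:ℝ) * Δ := by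
          have h1 : t / Δ ≤ ((⌈t / Δ⌉₊ : ℕ) : ℝ) := Nat.le_ceil _
          rw [hicast] at h1
          have : t ≤ ((i:ℝ) + 1) * Δ := by
            calc t = (t / Δ) * Δ := by field_simp
              _ ≤ ((i:ℝ) + 1) * Δ := by nlinarith
          linarith
        have hin : i ∈ Finset.range n := by
          refine Finset.mem_range.mpr ?_
          have : ⌈t / Δ⌉₊ ≤ n := by
            rw [Nat.ceil_le, div_le_iff₀ hΔ0, ← hnΔ]
            exact ht.2
          omega
        have hsub : C ∩ g ⁻¹' Ici t ⊆ W i := by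
          intro x hxm
          have hxU := hCU hxm.1
          have hxi := mem_iInter₂.mp hxU i hin
          rcases hxi with hxi | hxi
          · exact hxi
          · exact absurd (mem_preimage.mp hxi) (not_lt.mpr (hi1.le.trans hxm.2))
        calc μ.m (C ∩ g ⁻¹' Ici t) ≤ μ.m (W i) :=
              m_mono_co μ (cptAt g hg hC t) (hWo i) hsub
          _ ≤ μ.m (K ∩ g ⁻¹' Ici ((i:ℝ) * Δ)) + ENNReal.ofReal δ := hWle i
          _ ≤ μ.m (K ∩ g ⁻¹' Ici (t - Δ)) + ENNReal.ofReal δ :=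
              add_le_add_left (A_antitone μ g hg hK hi2) _
      have hmeasK : Measurable fun t : ℝ => μ.m (K ∩ g ⁻¹' Ici (t - Δ)) :=
        (A_antitone μ g hg hK).measurable.comp (measurable_id.sub measurable_const)
      calc nu1 μ g C = ∫⁻ t in Ioc (0:ℝ) M, μ.m (C ∩ g ⁻¹' Ici t) :=
            lint_Ioi_restrict _ hM0 fun t ht => A_eq_zero μ g h0 hgM C ht
        _ ≤ ∫⁻ t in Ioc (0:ℝ) M,
              (μ.m (K ∩ g ⁻¹' Ici (t - Δ)) + ENNReal.ofReal δ) :=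
            setLIntegral_mono (hmeasK.add measurable_const) hpt
        _ = (∫⁻ t in Ioc (0:ℝ) M, μ.m (K ∩ g ⁻¹' Ici (t - Δ)))
              + ENNReal.ofReal δ * ENNReal.ofReal M := by
            rw [lintegral_add_right _ measurable_const, setLIntegral_const,
              Real.volume_Ioc, sub_zero, mul_comm]
        _ = (∫⁻ t in Ioc (-Δ) (M - Δ), μ.m (K ∩ g ⁻¹' Ici t))
              + ENNReal.ofReal δ * ENNReal.ofReal M := by
            rw [lint_shift_Ioc (fun t => μ.m (K ∩ g ⁻¹' Ici t)) Δ 0 M, zero_sub]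
        _ = ((∫⁻ t in Ioc (-Δ) 0, μ.m (K ∩ g ⁻¹' Ici t))
              + ∫⁻ t in Ioc (0:ℝ) (M - Δ), μ.m (K ∩ g ⁻¹' Ici t))
              + ENNReal.ofReal δ * ENNReal.ofReal M := by
            rw [← lint_split_Ioc _ (neg_nonpos.mpr hΔ0.le) (by linarith)]
        _ ≤ (ENNReal.ofReal Δ * μ.m K + nu1 μ g K)
              + ENNReal.ofReal δ * ENNReal.ofReal M := by
            gcongr
            · have := lint_le_const (fun t => μ.m (K ∩ g ⁻¹' Ici t)) (a := -Δ) (b := 0)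
                (μ.m K) (fun t _ => A_le μ g hg hK t)
              simpa using this
            · exact lintegral_mono_set Ioc_subset_Ioi_self
        _ ≤ nu1 μ g K + ENNReal.ofReal δ * (μ.m K + ENNReal.ofReal M) := by
            rw [mul_add]
            calc ENNReal.ofReal Δ * μ.m K + nu1 μ g K + ENNReal.ofReal δ * ENNReal.ofReal M
                ≤ ENNReal.ofReal δ * μ.m K + nu1 μ g K
                  + ENNReal.ofReal δ * ENNReal.ofReal M := by
                  gcongr <;> exact ENNReal.ofReal_le_ofReal hΔδ
              _ = nu1 μ g K + (ENNReal.ofReal δ * μ.m K + ENNReal.ofReal δ * ENNReal.ofReal M) := by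
                  ring
theorem inner_eps {U : Set X} (hU : IsOpen U) (hfin : μ.m U ≠ ∞) {δ : ℝ} (hδ : 0 < δ) :
    ∃ C : Set X, IsCompact C ∧ C ⊆ U ∧ μ.m U ≤ μ.m C + ENNReal.ofReal δ := by
  by_cases hz : μ.m U ≤ ENNReal.ofReal δ
  · exact ⟨∅, isCompact_empty, empty_subset _, hz.trans (le_add_left le_rfl)⟩
  · have hδU : ENNReal.ofReal δ ≤ μ.m U := (not_le.mp hz).le
    have hne0 : μ.m U ≠ 0 := by
      intro h; rw [h] at hz; exact hz zero_le
    have hlt : μ.m U - ENNReal.ofReal δ < μ.m U :=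
      ENNReal.sub_lt_self hfin hne0 (ENNReal.ofReal_pos.mpr hδ).ne'
    conv_rhs at hlt => rw [μ.innerRegular hU]
    simp only [lt_iSup_iff] at hlt
    obtain ⟨C, hC, hCU, h⟩ := hlt
    exact ⟨C, hC, hCU, tsub_le_iff_right.mp h.le⟩

theorem num_compact (hcf : ∀ K : Set X, IsCompact K → μ.m K < ∞) (hg : Continuous g)
    {M : ℝ} (hM0 : 0 ≤ M) (hgM : ∀ x, g x ≤ M) {K : Set X} (hK : IsCompact K) :
    num μ g K = nu1 μ g K := by
  refine le_antisymm ?_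
    (le_iInf fun U => le_iInf fun hU => le_iInf fun hKU => nu1_le_nu2 μ g hK hKU)
  refine ennreal_le_of_forall_ofReal
    (c := μ.m K + ENNReal.ofReal M)
    (by exact ENNReal.add_ne_top.mpr ⟨(hcf K hK).ne, ENNReal.ofReal_ne_top⟩)
    fun δ hδ => ?_
  obtain ⟨U, hUo, hKU, hbound⟩ := keyB μ g hcf hg hM0 hgM hK hδ
  calc num μ g K ≤ nu2 μ g U :=
        iInf_le_of_le U (iInf_le_of_le hUo (iInf_le_of_le hKU le_rfl))
    _ ≤ nu1 μ g K + ENNReal.ofReal δ * (μ.m K + ENNReal.ofReal M) :=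
        iSup_le fun C => iSup_le fun hC => iSup_le fun hCU => hbound C hC hCU

theorem nu2_le_int (hcf : ∀ K : Set X, IsCompact K → μ.m K < ∞) (hg : Continuous g)
    {V : Set X} (hV : IsOpen V) :
    nu2 μ g V ≤ ∫⁻ t in Ioi (0:ℝ), μ.m (V ∩ g ⁻¹' Ioi t) := by
  refine iSup_le fun K => iSup_le fun hK => iSup_le fun hKV => ?_
  refine ennreal_le_of_forall_ofReal (c := μ.m K) (hcf K hK).ne fun ε hε => ?_
  have hDmeas : Measurable fun t : ℝ => μ.m (V ∩ g ⁻¹' Ioi (t - ε)) :=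
    (D_antitone μ g hg hV).measurable.comp (measurable_id.sub measurable_const)
  have hd : Disjoint (Ioc (0:ℝ) ε) (Ioi ε) :=
    disjoint_left.mpr fun x hx1 hx2 => absurd hx1.2 (not_le.mpr hx2)
  calc nu1 μ g K
      = (∫⁻ t in Ioc (0:ℝ) ε, μ.m (K ∩ g ⁻¹' Ici t))
        + ∫⁻ t in Ioi ε, μ.m (K ∩ g ⁻¹' Ici t) := by
        rw [nu1, ← Ioc_union_Ioi_eq_Ioi hε.le, lintegral_union measurableSet_Ioi hd]
    _ ≤ ENNReal.ofReal ε * μ.m K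
        + ∫⁻ t in Ioi ε, μ.m (V ∩ g ⁻¹' Ioi (t - ε)) := by
        refine add_le_add ?_ ?_
        · have := lint_le_const (fun t => μ.m (K ∩ g ⁻¹' Ici t)) (a := 0) (b := ε)
            (μ.m K) (fun t _ => A_le μ g hg hK t)
          simpa using this
        · refine setLIntegral_mono hDmeas fun t _ => ?_
          refine m_mono_co μ (cptAt g hg hK t) (hV.inter (isOpen_Ioi.preimage hg)) ?_
          refine inter_subset_inter hKV (preimage_mono fun y hy => ?_)
          simp only [mem_Ici] at hy
          simp only [mem_Ioi]
          linarith
    _ = ENNReal.ofReal ε * μ.m K + ∫⁻ t in Ioi (0:ℝ), μ.m (V ∩ g ⁻¹' Ioi t) := by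
        rw [lint_shift_Ioi (fun t => μ.m (V ∩ g ⁻¹' Ioi t)) ε ε, sub_self]
    _ = (∫⁻ t in Ioi (0:ℝ), μ.m (V ∩ g ⁻¹' Ioi t)) + ENNReal.ofReal ε * μ.m K :=
        add_comm _ _

theorem int_le_nu2 (hcf : ∀ K : Set X, IsCompact K → μ.m K < ∞) (hg : Continuous g)
    {M : ℝ} (hM0 : 0 ≤ M) (hgM : ∀ x, g x ≤ M)
    {V : Set X} (hV : IsOpen V) (hVfin : μ.m V < ∞) :
    (∫⁻ t in Ioi (0:ℝ), μ.m (V ∩ g ⁻¹' Ioi t)) ≤ nu2 μ g V := by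
  have h0 : μ.m ∅ = 0 := m_empty μ hcf
  refine ennreal_le_of_forall_ofReal
    (c := μ.m V + ENNReal.ofReal M)
    (by exact ENNReal.add_ne_top.mpr ⟨hVfin.ne, ENNReal.ofReal_ne_top⟩)
    fun δ hδ => ?_
  rcases eq_or_lt_of_le hM0 with hM | hM
  · have hz : (∫⁻ t in Ioi (0:ℝ), μ.m (V ∩ g ⁻¹' Ioi t)) = 0 := by
      rw [setLIntegral_congr_fun measurableSet_Ioi
        (fun t (ht : t ∈ Ioi (0:ℝ)) =>
          D_eq_zero μ g h0 hgM V (le_of_lt (lt_of_le_of_lt hM.ge ht))), lintegral_zero]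
    rw [hz]; exact zero_le
  · set n : ℕ := ⌈M / δ⌉₊ with hn
    have hnpos : 0 < n := Nat.ceil_pos.mpr (div_pos hM hδ)
    set Δ : ℝ := M / n with hΔ
    have hΔ0 : 0 < Δ := div_pos hM (by exact_mod_cast hnpos)
    have hnΔ : M = (n : ℝ) * Δ := by rw [hΔ]; field_simp
    have hΔδ : Δ ≤ δ := by
      rw [hΔ, div_le_iff₀ (by exact_mod_cast hnpos)]
      calc M = δ * (M / δ) := by field_simp
        _ ≤ δ * n := by
            have := Nat.le_ceil (M / δ)
            nlinarith [this]
    have hΔM : Δ ≤ M := by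
      calc Δ = 1 * Δ := (one_mul Δ).symm
        _ ≤ (n:ℝ) * Δ := by
            have : (1:ℝ) ≤ (n:ℝ) := by exact_mod_cast hnpos
            nlinarith
        _ = M := hnΔ.symm
    -- choose compact subsets of the open level sets
    have hex : ∀ i : ℕ, ∃ C : Set X, IsCompact C ∧ C ⊆ V ∩ g ⁻¹' Ioi ((i:ℝ) * Δ) ∧
        μ.m (V ∩ g ⁻¹' Ioi ((i:ℝ) * Δ)) ≤ μ.m C + ENNReal.ofReal δ := fun i =>
      inner_eps μ (hV.inter (isOpen_Ioi.preimage hg))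
        (lt_of_le_of_lt (D_le μ g hV hg _) hVfin).ne hδ
    choose C hCcpt hCsub hCle using hex
    set K : Set X := ⋃ i ∈ Finset.range (n+1), C i with hKdef
    have hKcpt : IsCompact K := by
      rw [hKdef]
      exact (Finset.range (n+1)).finite_toSet.isCompact_biUnion fun i _ => hCcpt i
    have hKV : K ⊆ V := by
      rw [hKdef]
      exact iUnion₂_subset fun i _ => (hCsub i).trans inter_subset_left
    -- pointwise bound
    have hpt : ∀ t ∈ Ioc Δ M,
        μ.m (V ∩ g ⁻¹' Ioi t) ≤ μ.m (K ∩ g ⁻¹' Ici (t - Δ)) + ENNReal.ofReal δ := by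
      intro t ht
      set s : ℝ := t - Δ with hs
      have hs0 : 0 < s := by simp [hs]; linarith [ht.1]
      set i : ℕ := ⌈s / Δ⌉₊ with hi
      have hipos : 1 ≤ i := Nat.ceil_pos.mpr (div_pos hs0 hΔ0)
      have hi1 : ((i:ℝ) - 1) * Δ < s := by
        have h1 : (i - 1 : ℕ) < i := by omega
        have h2 : ((i - 1 : ℕ) : ℝ) < s / Δ := Nat.lt_ceil.mp (by rw [← hi]; omega)
        have h3 : ((i - 1 : ℕ) : ℝ) = (i:ℝ) - 1 := by
          rw [Nat.cast_sub hipos]; simp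
        rw [h3] at h2
        calc ((i:ℝ) - 1) * Δ < (s / Δ) * Δ := by nlinarith
          _ = s := by field_simp
      have hi2 : s ≤ (i:ℝ) * Δ := by
        have h1 : s / Δ ≤ (i:ℝ) := Nat.le_ceil _
        calc s = (s / Δ) * Δ := by field_simp
          _ ≤ (i:ℝ) * Δ := by nlinarith
      have hin : i ≤ n := by
        rw [hi, Nat.ceil_le, div_le_iff₀ hΔ0, ← hnΔ]
        linarith [ht.2]
      have hCK : C i ⊆ K ∩ g ⁻¹' Ici s := by
        intro x hx
        refine ⟨?_, ?_⟩
        · rw [hKdef]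
          exact mem_biUnion (Finset.mem_range.mpr (by omega)) hx
        · have := (hCsub i hx).2
          simp only [mem_preimage, mem_Ioi] at this
          simp only [mem_preimage, mem_Ici]
          linarith
      calc μ.m (V ∩ g ⁻¹' Ioi t)
          ≤ μ.m (V ∩ g ⁻¹' Ioi ((i:ℝ) * Δ)) := by
            refine D_antitone μ g hg hV ?_
            have : (i:ℝ) * Δ ≤ s + Δ := by nlinarith [hi1]
            simpa [hs] using this
        _ ≤ μ.m (C i) + ENNReal.ofReal δ := hCle i
        _ ≤ μ.m (K ∩ g ⁻¹' Ici (t - Δ)) + ENNReal.ofReal δ := by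
            gcongr
            exact m_mono_cc μ (hCcpt i) (cptAt g hg hKcpt _) (by rw [← hs]; exact hCK)
    have hmeasK : Measurable fun t : ℝ => μ.m (K ∩ g ⁻¹' Ici (t - Δ)) :=
      (A_antitone μ g hg hKcpt).measurable.comp (measurable_id.sub measurable_const)
    calc (∫⁻ t in Ioi (0:ℝ), μ.m (V ∩ g ⁻¹' Ioi t))
        = ∫⁻ t in Ioc (0:ℝ) M, μ.m (V ∩ g ⁻¹' Ioi t) :=
          lint_Ioi_restrict _ hM0 fun t ht => D_eq_zero μ g h0 hgM V ht.le
      _ = (∫⁻ t in Ioc (0:ℝ) Δ, μ.m (V ∩ g ⁻¹' Ioi t))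
          + ∫⁻ t in Ioc Δ M, μ.m (V ∩ g ⁻¹' Ioi t) :=
          lint_split_Ioc _ hΔ0.le hΔM
      _ ≤ ENNReal.ofReal Δ * μ.m V
          + ∫⁻ t in Ioc Δ M, (μ.m (K ∩ g ⁻¹' Ici (t - Δ)) + ENNReal.ofReal δ) := by
          refine add_le_add ?_ (setLIntegral_mono (hmeasK.add measurable_const) hpt)
          have := lint_le_const (fun t => μ.m (V ∩ g ⁻¹' Ioi t)) (a := 0) (b := Δ)
              (μ.m V) (fun t _ => D_le μ g hV hg t)
          simpa using this
      _ = ENNReal.ofReal Δ * μ.m V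
          + ((∫⁻ t in Ioc (0:ℝ) (M - Δ), μ.m (K ∩ g ⁻¹' Ici t))
             + ENNReal.ofReal δ * ENNReal.ofReal (M - Δ)) := by
          rw [lintegral_add_right _ measurable_const, setLIntegral_const,
            Real.volume_Ioc,
            lint_shift_Ioc (fun t => μ.m (K ∩ g ⁻¹' Ici t)) Δ Δ M, sub_self, mul_comm]
      _ ≤ ENNReal.ofReal δ * μ.m V
          + (nu1 μ g K + ENNReal.ofReal δ * ENNReal.ofReal M) := by
          exact add_le_add (mul_le_mul_left (ENNReal.ofReal_le_ofReal hΔδ) _)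
            (add_le_add (lintegral_mono_set Ioc_subset_Ioi_self)
              (mul_le_mul_right (ENNReal.ofReal_le_ofReal (by linarith)) _))
      _ ≤ nu2 μ g V + ENNReal.ofReal δ * (μ.m V + ENNReal.ofReal M) := by
          rw [mul_add]
          calc ENNReal.ofReal δ * μ.m V + (nu1 μ g K + ENNReal.ofReal δ * ENNReal.ofReal M)
              ≤ ENNReal.ofReal δ * μ.m V + (nu2 μ g V + ENNReal.ofReal δ * ENNReal.ofReal M) := by
                gcongr
                exact nu1_le_nu2 μ g hKcpt hKV
            _ = nu2 μ g V + (ENNReal.ofReal δ * μ.m V + ENNReal.ofReal δ * ENNReal.ofReal M) := by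
                ring

theorem nu1_add (hg : Continuous g) {C K : Set X} (hC : IsCompact C) (hK : IsCompact K)
    (hd : Disjoint C K) : nu1 μ g (C ∪ K) = nu1 μ g C + nu1 μ g K := by
  rw [nu1, nu1, nu1, ← lintegral_add_left (A_antitone μ g hg hC).measurable]
  refine lintegral_congr fun t => ?_
  rw [union_inter_distrib_right]
  exact μ.additive (cptAt g hg hC t) (cptAt g hg hK t)
    (hd.mono inter_subset_left inter_subset_left)
end Stmt4Aux

section
open Stmt4Aux

/-- Let `μ` be a compact-finite deficient topological measure on a locally
compact Hausdorff space and `g ∈ C₀⁺(X)`. Then there is a compact-finite deficient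
topological measure `μ_g` with `μ_g(K) = ∫₀^∞ μ(K ∩ g⁻¹([t,∞))) dt` for compact `K`,
`μ_g(V) = ∫₀^∞ μ(V ∩ g⁻¹((t,∞))) dt` for open `V` with `μ(V) < ∞`, and
`μ_g(K) ≤ ‖g‖_∞ μ(K)` for compact `K`. -/
theorem stmt4 {X : Type*} [TopologicalSpace X] [LocallyCompactSpace X] [T2Space X]
    (μ : DeficientTopologicalMeasure X)
    (hcf : ∀ K : Set X, IsCompact K → μ.m K < ∞)
    (g : X → ℝ) (hg : Continuous g) (hg0 : ∀ x, 0 ≤ g x)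
    (hginf : Tendsto g (cocompact X) (nhds 0)) :
    ∃ ν : DeficientTopologicalMeasure X,
      (∀ K : Set X, IsCompact K → ν.m K < ∞) ∧
      (∀ K : Set X, IsCompact K →
        ν.m K = ∫⁻ t in Ioi (0 : ℝ), μ.m (K ∩ g ⁻¹' (Ici t))) ∧
      (∀ V : Set X, IsOpen V → μ.m V < ∞ →
        ν.m V = ∫⁻ t in Ioi (0 : ℝ), μ.m (V ∩ g ⁻¹' (Ioi t))) ∧
      (∀ K : Set X, IsCompact K → ν.m K ≤ ENNReal.ofReal (⨆ x, g x) * μ.m K) := by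

  -- the sup of g is a genuine bound
  have hbdd : BddAbove (range g) := by
    have h1 : g ⁻¹' Iio 1 ∈ cocompact X := hginf (Iio_mem_nhds one_pos)
    obtain ⟨K₀, hK₀, hsub⟩ := mem_cocompact.mp h1
    obtain ⟨B, hB⟩ := (hK₀.bddAbove_image hg.continuousOn)
    refine ⟨max B 1, fun y hy => ?_⟩
    obtain ⟨x, rfl⟩ := hy
    by_cases hx : x ∈ K₀
    · exact le_max_of_le_left (hB (mem_image_of_mem g hx))
    · exact le_max_of_le_right (le_of_lt (hsub hx))
  set M : ℝ := ⨆ x, g x with hM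
  have hgM : ∀ x, g x ≤ M := fun x => le_ciSup hbdd x
  have hM0 : 0 ≤ M := by
    rcases isEmpty_or_nonempty X with h | h
    · rw [hM, Real.iSup_of_isEmpty]
    · exact le_trans (hg0 (Classical.arbitrary X)) (hgM (Classical.arbitrary X))
  have h0 : μ.m ∅ = 0 := m_empty μ hcf
  refine ⟨⟨num μ g, ?_, ?_, ?_⟩, ?_, ?_, ?_, ?_⟩
  · -- additivity on disjoint compacts
    intro C K hC hK hd
    show num μ g (C ∪ K) = num μ g C + num μ g K
    rw [num_compact μ g hcf hg hM0 hgM (hC.union hK),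
      num_compact μ g hcf hg hM0 hgM hC, num_compact μ g hcf hg hM0 hgM hK,
      nu1_add μ g hg hC hK hd]
  · -- inner regularity
    intro U hU
    show num μ g U = ⨆ (K : Set X) (_ : IsCompact K) (_ : K ⊆ U), num μ g K
    rw [num_open μ g hU, nu2]
    exact iSup_congr fun K => iSup_congr fun hK => iSup_congr fun _ =>
      (num_compact μ g hcf hg hM0 hgM hK).symm
  · -- outer regularity
    intro F _
    show num μ g F = ⨅ (U : Set X) (_ : IsOpen U) (_ : F ⊆ U), num μ g U
    rw [num]
    exact iInf_congr fun U => iInf_congr fun hU => iInf_congr fun _ =>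
      (num_open μ g hU).symm
  · -- compact-finiteness
    intro K hK
    show num μ g K < ∞
    rw [num_compact μ g hcf hg hM0 hgM hK]
    exact lt_of_le_of_lt (nu1_le_mul μ g hg h0 hM0 hgM hK)
      (ENNReal.mul_lt_top ENNReal.ofReal_lt_top (hcf K hK))
  · -- value on compact sets
    intro K hK
    exact num_compact μ g hcf hg hM0 hgM hK
  · -- value on finite open sets
    intro V hV hVfin
    show num μ g V = _
    rw [num_open μ g hV]
    exact le_antisymm (nu2_le_int μ g hcf hg hV)
      (int_le_nu2 μ g hcf hg hM0 hgM hV hVfin)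
  · -- norm bound
    intro K hK
    show num μ g K ≤ _
    rw [num_compact μ g hcf hg hM0 hgM hK]
    exact nu1_le_mul μ g hg h0 hM0 hgM hK

end
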